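/- Let I be a proper nonzero ideal of S with √I = m. Then for all sufficiently large q = p^e, (n+1)q − M_q(I) = reg(S/I) + (n+1). -/

import Mathlib

/-!
STATEMENT 3: Let `I` be a proper nonzero ideal of `S = k[x_0, …, x_n]` (char `k = p > 0`)
with `√I = m`. Then for all sufficiently large `q = p^e`,
`(n+1)q − M_q(I) = reg(S/I) + (n+1)`, where
`M_q(I) = max{ℓ ≥ 0 : (m^{[q]} : I) ⊆ m^{[q]} + m^ℓ}` and `reg(S/I)` is the largest
integer `a` such that `m^a ⊄ I`.
-/

noncomputable section

open MvPolynomial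

/-- The homogeneous maximal ideal `m = (x_0, …, x_n)` of `k[x_0, …, x_n]`. -/
def maxIdeal (k : Type) [Field k] (n : ℕ) : Ideal (MvPolynomial (Fin (n + 1)) k) :=
  Ideal.span (Set.range MvPolynomial.X)

/-- The `q`-th bracket (Frobenius) power `I^{[q]}` of an ideal. -/
def brk {R : Type} [CommRing R] (I : Ideal R) (q : ℕ) : Ideal R :=
  Ideal.span ((fun a => a ^ q) '' (I : Set R))

/-- `M_q(I) = max{ℓ ≥ 0 : (m^{[q]} : I) ⊆ m^{[q]} + m^ℓ}`. -/
def Mq (k : Type) [Field k] (n : ℕ) (I : Ideal (MvPolynomial (Fin (n + 1)) k)) (q : ℕ) : ℕ :=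
  sSup {ℓ : ℕ | Submodule.colon (brk (maxIdeal k n) q) I ≤
    brk (maxIdeal k n) q ⊔ (maxIdeal k n) ^ ℓ}

/-- `reg(S/I)`: the largest integer `a` such that `m^a ⊄ I` (for `I` containing a power
of `m`). -/
def reg (k : Type) [Field k] (n : ℕ) (I : Ideal (MvPolynomial (Fin (n + 1)) k)) : ℕ :=
  sSup {a : ℕ | ¬ (maxIdeal k n) ^ a ≤ I}

namespace Stmt3Aux

variable {k : Type} [Field k] {n : ℕ}

/-- total degree of an exponent vector -/
def dg {n : ℕ} (μ : Fin (n+1) →₀ ℕ) : ℕ := ∑ i, μ i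

lemma dg_mono {μ ν : Fin (n+1) →₀ ℕ} (h : μ ≤ ν) : dg μ ≤ dg ν :=
  Finset.sum_le_sum fun i _ => h i

lemma dg_add (μ ν : Fin (n+1) →₀ ℕ) : dg (μ + ν) = dg μ + dg ν := by
  simp [dg, Finset.sum_add_distrib]

lemma dg_single (i : Fin (n+1)) (b : ℕ) : dg (Finsupp.single i b) = b := by
  simp [dg, Finsupp.single_apply]

lemma le_dg (μ : Fin (n+1) →₀ ℕ) (i : Fin (n+1)) : μ i ≤ dg μ :=
  Finset.single_le_sum (fun _ _ => Nat.zero_le _) (Finset.mem_univ i)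

lemma X_mem_maxIdeal (i : Fin (n+1)) : (X i : MvPolynomial (Fin (n+1)) k) ∈ maxIdeal k n := by
  rw [maxIdeal]; exact Ideal.subset_span ⟨i, rfl⟩

lemma monomial_mem_pow_dg (μ : Fin (n+1) →₀ ℕ) (c : k) :
    monomial μ c ∈ (maxIdeal k n) ^ (dg μ) := by
  have key : ∀ μ : Fin (n+1) →₀ ℕ, monomial μ (1:k) ∈ (maxIdeal k n) ^ (dg μ) := by
    intro μ
    induction μ using Finsupp.induction with
    | zero => simp [dg]
    | single_add a b f ha hb ih =>
      have hdg : dg (Finsupp.single a b + f) = b + dg f := by rw [dg_add, dg_single]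
      have hm : monomial (Finsupp.single a b + f) (1:k) = (X a)^b * monomial f 1 := by
        rw [X_pow_eq_monomial, monomial_mul, one_mul]
      rw [hdg, pow_add, hm]
      exact Ideal.mul_mem_mul (Ideal.pow_mem_pow (X_mem_maxIdeal a) b) ih
  have hc : monomial μ c = C c * monomial μ 1 := by rw [C_mul_monomial, mul_one]
  rw [hc]
  exact Ideal.mul_mem_left _ _ (key μ)

lemma maxIdeal_eq :
    maxIdeal k n = Ideal.span ((fun s => monomial s (1:k)) '' {μ | 1 ≤ dg μ}) := by
  apply le_antisymm
  · rw [maxIdeal, Ideal.span_le]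
    rintro _ ⟨i, rfl⟩
    refine Ideal.subset_span ⟨Finsupp.single i 1, by simp [dg_single], ?_⟩
    simp only []
    rw [← pow_one (X i : MvPolynomial (Fin (n+1)) k), X_pow_eq_monomial]
  · rw [Ideal.span_le]
    rintro _ ⟨μ, hμ, rfl⟩
    have := monomial_mem_pow_dg μ (1:k)
    have h2 : (maxIdeal k n) ^ (dg μ) ≤ (maxIdeal k n) ^ 1 := Ideal.pow_le_pow_right hμ
    simpa using h2 this

lemma pow_maxIdeal_eq (t : ℕ) :
    (maxIdeal k n) ^ t = Ideal.span ((fun s => monomial s (1:k)) '' {μ | t ≤ dg μ}) := by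
  classical
  induction t with
  | zero =>
    rw [pow_zero, eq_comm, Ideal.one_eq_top, Ideal.eq_top_iff_one]
    exact Ideal.subset_span ⟨0, by simp, by simp⟩
  | succ t ih =>
    apply le_antisymm
    · rw [pow_succ, Ideal.mul_le]
      intro r hr s hs
      rw [ih, mem_ideal_span_monomial_image] at hr
      rw [maxIdeal_eq, mem_ideal_span_monomial_image] at hs
      rw [mem_ideal_span_monomial_image]
      intro ξ hξ
      obtain ⟨a, ha, b, hb, rfl⟩ := Finset.mem_add.mp (support_mul r s hξ)
      obtain ⟨τ, hτ, hτa⟩ := hr a ha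
      obtain ⟨ρ, hρ, hρb⟩ := hs b hb
      simp only [Set.mem_setOf_eq] at hτ hρ
      exact ⟨τ + ρ, by rw [Set.mem_setOf_eq, dg_add]; omega,
        add_le_add hτa hρb⟩
    · rw [Ideal.span_le]
      rintro _ ⟨μ, hμ, rfl⟩
      exact Ideal.pow_le_pow_right hμ (monomial_mem_pow_dg μ 1)

lemma mem_pow_maxIdeal {f : MvPolynomial (Fin (n+1)) k} {t : ℕ} :
    f ∈ (maxIdeal k n) ^ t ↔ ∀ μ ∈ f.support, t ≤ dg μ := by
  rw [pow_maxIdeal_eq, mem_ideal_span_monomial_image]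
  constructor
  · intro h μ hμ
    obtain ⟨τ, hτ, hle⟩ := h μ hμ
    exact hτ.trans (dg_mono hle)
  · exact fun h μ hμ => ⟨μ, h μ hμ, le_rfl⟩

lemma monomial_mem_pow_maxIdeal {μ : Fin (n+1) →₀ ℕ} {c : k} {t : ℕ} (h : t ≤ dg μ) :
    monomial μ c ∈ (maxIdeal k n) ^ t :=
  mem_pow_maxIdeal.mpr fun ν hν => by
    classical
    rw [mem_support_iff, coeff_monomial] at hν
    rcases eq_or_ne μ ν with rfl | hne
    · exact h
    · simp [hne] at hν

section Brk

variable (p : ℕ) [Fact p.Prime] [CharP k p] (e : ℕ)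

lemma brk_eq :
    brk (maxIdeal k n) (p^e) =
      Ideal.span ((fun s => monomial s (1:k)) '' {μ | ∃ i, p^e ≤ μ i}) := by
  apply le_antisymm
  · rw [brk, Ideal.span_le]
    rintro _ ⟨f, hf, rfl⟩
    rw [maxIdeal, SetLike.mem_coe, Ideal.mem_span_range_iff_exists_fun] at hf
    obtain ⟨c, rfl⟩ := hf
    show (∑ i, c i * X i) ^ (p^e) ∈ _
    rw [sum_pow_char_pow]
    apply Ideal.sum_mem
    intro i _
    rw [mul_pow]
    refine Ideal.mul_mem_left _ _ (Ideal.subset_span ⟨Finsupp.single i (p^e), ⟨i, ?_⟩, ?_⟩)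
    · simp
    · simp only []
      rw [X_pow_eq_monomial]
  · rw [Ideal.span_le]
    rintro _ ⟨μ, ⟨i, hi⟩, rfl⟩
    have key : (monomial μ (1:k) : MvPolynomial (Fin (n+1)) k) =
        (X i)^(p^e) * monomial (μ - Finsupp.single i (p^e)) 1 := by
      rw [X_pow_eq_monomial, monomial_mul, one_mul,
        add_tsub_cancel_of_le (Finsupp.single_le_iff.mpr hi)]
    show (monomial μ (1:k)) ∈ _
    rw [key, brk]
    exact Ideal.mul_mem_right _ _
      (Ideal.subset_span ⟨X i, by simpa [SetLike.mem_coe] using X_mem_maxIdeal i, rfl⟩)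

lemma mem_brk {f : MvPolynomial (Fin (n+1)) k} :
    f ∈ brk (maxIdeal k n) (p^e) ↔ ∀ μ ∈ f.support, ∃ i, p^e ≤ μ i := by
  rw [brk_eq, mem_ideal_span_monomial_image]
  constructor
  · intro h μ hμ
    obtain ⟨τ, ⟨i, hτi⟩, hle⟩ := h μ hμ
    exact ⟨i, hτi.trans (hle i)⟩
  · rintro h μ hμ
    obtain ⟨i, hi⟩ := h μ hμ
    exact ⟨Finsupp.single i (p^e), ⟨i, by simp⟩, Finsupp.single_le_iff.mpr hi⟩

lemma monomial_mem_brk {μ : Fin (n+1) →₀ ℕ} {c : k} (h : ∃ i, p^e ≤ μ i) :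
    monomial μ c ∈ brk (maxIdeal k n) (p^e) :=
  (mem_brk p e).mpr fun ν hν => by
    classical
    rw [mem_support_iff, coeff_monomial] at hν
    rcases eq_or_ne μ ν with rfl | hne
    · exact h
    · simp [hne] at hν

lemma brk_le_pow {t : ℕ} (h : t ≤ p^e) :
    brk (maxIdeal k n) (p^e) ≤ (maxIdeal k n) ^ t := by
  intro f hf
  rw [mem_brk] at hf
  rw [mem_pow_maxIdeal]
  intro μ hμ
  obtain ⟨i, hi⟩ := hf μ hμ
  exact h.trans (hi.trans (le_dg μ i))

end Brk

lemma exists_le_dg (t : ℕ) (β : Fin (n+1) →₀ ℕ) (h : t ≤ dg β) :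
    ∃ ν ≤ β, dg ν = t := by
  induction t with
  | zero => exact ⟨0, zero_le, by simp [dg]⟩
  | succ t ih =>
    obtain ⟨ν, hνβ, hν⟩ := ih (Nat.le_of_succ_le h)
    have : ∃ i, ν i < β i := by
      by_contra hc
      push_neg at hc
      have : dg β ≤ dg ν := Finset.sum_le_sum fun i _ => hc i
      omega
    obtain ⟨i, hi⟩ := this
    refine ⟨ν + Finsupp.single i 1, ?_, by rw [dg_add, hν, dg_single]⟩
    intro j
    rcases eq_or_ne j i with rfl | hne
    · simpa [Finsupp.single_apply] using hi
    · simpa [Finsupp.single_apply, hne.symm, if_neg] using hνβ j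

section Colon

variable (p : ℕ) [Fact p.Prime] [CharP k p] (e : ℕ)

/-- Key upper bound: if `u · m^t ⊆ m^[q]` then `u ∈ m^[q] + m^{s+1-t}`,
where `s = (n+1)(q-1)`. -/
lemma colon_pow_le (t : ℕ) (u : MvPolynomial (Fin (n+1)) k)
    (hu : ∀ w ∈ (maxIdeal k n)^t, u * w ∈ brk (maxIdeal k n) (p^e)) :
    u ∈ brk (maxIdeal k n) (p^e) ⊔ (maxIdeal k n) ^ ((n+1)*(p^e-1)+1-t) := by
  classical
  set q := p^e with hq
  have hq1 : 1 ≤ q := Nat.one_le_pow _ _ (Fact.out (p := p.Prime)).pos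
  -- every exponent in the support is either big in one coordinate or has big degree
  have key : ∀ μ ∈ u.support, (∃ i, q ≤ μ i) ∨ (n+1)*(q-1)+1-t ≤ dg μ := by
    intro μ hμ
    by_contra hc
    push_neg at hc
    obtain ⟨h1, h2⟩ := hc
    have hsmall : ∀ i, μ i ≤ q - 1 := fun i => by have := h1 i; omega
    -- the complementary box has degree ≥ t
    set β : Fin (n+1) →₀ ℕ := Finsupp.equivFunOnFinite.symm (fun i => q - 1 - μ i) with hβ
    have hβapp : ∀ i, β i = q - 1 - μ i := fun i => rfl
    have hβdg : dg β + dg μ = (n+1)*(q-1) := by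
      rw [dg, dg, ← Finset.sum_add_distrib]
      have : ∀ i ∈ Finset.univ, β i + μ i = q - 1 := fun i _ => by
        rw [hβapp]; have := hsmall i; omega
      rw [Finset.sum_congr rfl this, Finset.sum_const, Finset.card_univ,
        Fintype.card_fin, smul_eq_mul]
    have ht : t ≤ dg β := by omega
    obtain ⟨ν, hνβ, hνdg⟩ := exists_le_dg t β ht
    have hmem : u * monomial ν 1 ∈ brk (maxIdeal k n) q :=
      hu _ (monomial_mem_pow_maxIdeal (le_of_eq hνdg.symm))
    have hcoeff : coeff (μ + ν) (u * monomial ν (1:k)) = coeff μ u := by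
      rw [coeff_mul_monomial, mul_one]
    have hsmall2 : ∀ i, (μ + ν) i ≤ q - 1 := by
      intro i
      have h3 := hνβ i
      rw [hβapp] at h3
      have := hsmall i
      simp only [Finsupp.add_apply]
      omega
    have : coeff (μ + ν) (u * monomial ν (1:k)) = 0 := by
      by_contra h0
      obtain ⟨i, hi⟩ := (mem_brk p e).mp hmem (μ + ν) (mem_support_iff.mpr h0)
      have := hsmall2 i
      omega
    rw [hcoeff] at this
    exact mem_support_iff.mp hμ this
  -- split u along the support
  rw [← support_sum_monomial_coeff u]
  apply Submodule.sum_mem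
  intro μ hμ
  rcases key μ hμ with h | h
  · exact Submodule.mem_sup_left (monomial_mem_brk p e h)
  · exact Submodule.mem_sup_right (monomial_mem_pow_maxIdeal h)

end Colon

/-- separation of a point from a subspace by a linear functional -/
lemma exists_functional {V : Type} [AddCommGroup V] [Module k V]
    (J : Submodule k V) (f : V) (hf : f ∉ J) :
    ∃ ψ : V →ₗ[k] k, (∀ w ∈ J, ψ w = 0) ∧ ψ f ≠ 0 := by
  set x : V ⧸ J := Submodule.Quotient.mk f with hx
  have hx0 : x ≠ 0 := by
    simpa [hx, Submodule.Quotient.mk_eq_zero] using hf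
  obtain ⟨W', hW'⟩ := Submodule.exists_isCompl (Submodule.span k {x})
  set π := Submodule.linearProjOfIsCompl _ _ hW' with hπ
  set eqv := LinearEquiv.toSpanNonzeroSingleton k (V ⧸ J) x hx0 with heqv
  refine ⟨eqv.symm.toLinearMap ∘ₗ π ∘ₗ J.mkQ, fun w hw => ?_, ?_⟩
  · have : J.mkQ w = 0 := by simpa [Submodule.Quotient.mk_eq_zero] using hw
    simp [this]
  · have hπx : π x = ⟨x, Submodule.mem_span_singleton_self x⟩ :=
      Submodule.linearProjOfIsCompl_apply_left hW' ⟨x, Submodule.mem_span_singleton_self x⟩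
    intro h0
    have : π (J.mkQ f) = 0 := by
      have := congrArg eqv.toLinearMap h0
      simpa [LinearMap.comp_apply] using this
    rw [show J.mkQ f = x from rfl, hπx] at this
    exact hx0 (by simpa using congrArg Subtype.val this)

section U

variable (p : ℕ) [Fact p.Prime] [CharP k p] (e : ℕ)

lemma exists_u (r : ℕ) (I : Ideal (MvPolynomial (Fin (n+1)) k))
    (hq : r + 2 ≤ p^e)
    (hI1 : (maxIdeal k n)^(r+1) ≤ I)
    (f : MvPolynomial (Fin (n+1)) k) (hf : f ∈ (maxIdeal k n)^r) (hfI : f ∉ I) :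
    ∃ u, u ∈ Submodule.colon (brk (maxIdeal k n) (p^e)) I ∧
      u ∉ brk (maxIdeal k n) (p^e) ⊔ (maxIdeal k n)^((n+1)*(p^e-1) - r + 1) := by
  classical
  have hq1 : 1 ≤ p^e := by omega
  have hBI : brk (maxIdeal k n) (p^e) ≤ I :=
    le_trans (brk_le_pow p e (by omega)) hI1
  obtain ⟨ψ, hψI, hψf⟩ := exists_functional (I.restrictScalars k) f (by simpa using hfI)
  have hψI' : ∀ w ∈ I, ψ w = 0 := fun w hw => hψI w (by simpa using hw)
  set q := p^e with hqdef
  set g : Fin (n+1) →₀ ℕ := Finsupp.equivFunOnFinite.symm (fun _ => q - 1) with hg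
  have hgapp : ∀ i, g i = q - 1 := fun i => rfl
  set u : MvPolynomial (Fin (n+1)) k :=
    ∑ μ ∈ Finset.Iic g, monomial μ (ψ (monomial (g - μ) (1:k))) with hu
  -- the key coefficient formula
  have hcoeff : ∀ τ, τ ≤ g → ∀ w : MvPolynomial (Fin (n+1)) k,
      coeff τ (u * w) =
        ψ (monomial (g - τ) 1 * ∑ ν ∈ Finset.Iic τ, monomial ν (coeff ν w)) := by
    intro τ hτ w
    rw [hu, Finset.sum_mul, coeff_sum]
    simp only [coeff_monomial_mul']
    rw [← Finset.sum_filter]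
    have hfil : (Finset.Iic g).filter (· ≤ τ) = Finset.Iic τ := by
      ext μ
      simp only [Finset.mem_filter, Finset.mem_Iic]
      exact ⟨fun h => h.2, fun h => ⟨h.trans hτ, h⟩⟩
    rw [hfil, Finset.mul_sum, map_sum]
    refine Finset.sum_nbij' (fun μ => τ - μ) (fun ν => τ - ν) ?_ ?_ ?_ ?_ ?_
    · intro μ _; exact Finset.mem_Iic.mpr tsub_le_self
    · intro ν _; exact Finset.mem_Iic.mpr tsub_le_self
    · intro μ hμ; exact tsub_tsub_cancel_of_le (Finset.mem_Iic.mp hμ)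
    · intro ν hν; exact tsub_tsub_cancel_of_le (Finset.mem_Iic.mp hν)
    · intro μ hμ
      have hμτ : μ ≤ τ := Finset.mem_Iic.mp hμ
      have h1 : monomial (g - τ) (1:k) * monomial (τ - μ) (coeff (τ - μ) w) =
          monomial (g - μ) (coeff (τ - μ) w) := by
        rw [monomial_mul, one_mul, tsub_add_tsub_cancel hτ hμτ]
      rw [h1]
      have h2 : (monomial (g - μ) (coeff (τ - μ) w)) =
          (coeff (τ - μ) w) • monomial (g - μ) (1:k) := by
        rw [smul_monomial, smul_eq_mul, mul_one]
      rw [h2, map_smul, smul_eq_mul, mul_comm]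
  -- the truncation error lies in the Frobenius power
  have htruncsupp : ∀ τ, ∀ w : MvPolynomial (Fin (n+1)) k,
      ∀ ν ∈ (w - ∑ ν ∈ Finset.Iic τ, monomial ν (coeff ν w)).support, ¬ ν ≤ τ := by
    intro τ w ν hν hle
    rw [mem_support_iff] at hν
    apply hν
    rw [coeff_sub, coeff_sum]
    simp only [coeff_monomial]
    rw [Finset.sum_ite_eq' (Finset.Iic τ) ν (fun ν' => coeff ν' w),
      if_pos (Finset.mem_Iic.mpr hle), sub_self]
  -- for w ∈ I the coefficient vanishes
  have hvanish : ∀ τ, τ ≤ g → ∀ w ∈ I, coeff τ (u * w) = 0 := by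
    intro τ hτ w hw
    rw [hcoeff τ hτ w]
    set tr := ∑ ν ∈ Finset.Iic τ, monomial ν (coeff ν w) with htr
    have hsplit : monomial (g - τ) (1:k) * tr =
        monomial (g - τ) 1 * w - monomial (g - τ) 1 * (w - tr) := by ring
    have herr : monomial (g - τ) (1:k) * (w - tr) ∈ brk (maxIdeal k n) q := by
      rw [mem_brk]
      intro ξ hξ
      obtain ⟨a, ha, b, hb, rfl⟩ := Finset.mem_add.mp (support_mul _ _ hξ)
      have ha' : a = g - τ := by
        by_contra hne
        simp [coeff_monomial, Ne.symm hne, mem_support_iff] at ha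
      obtain ⟨i, hi⟩ : ∃ i, τ i < b i := by
        have := htruncsupp τ w b hb
        by_contra hc
        push_neg at hc
        exact this fun i => hc i
      refine ⟨i, ?_⟩
      have h1 : (g - τ) i = q - 1 - τ i := by rw [Finsupp.tsub_apply, hgapp]
      have h2 : τ i ≤ q - 1 := by have := hτ i; rwa [hgapp] at this
      subst ha'
      simp only [Finsupp.add_apply, h1]
      omega
    rw [hsplit, map_sub, hψI' _ (Ideal.mul_mem_left _ _ hw), hψI' _ (hBI herr), sub_self]
  -- u is in the colon ideal
  have hucolon : u ∈ Submodule.colon (brk (maxIdeal k n) q) I := by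
    rw [Submodule.mem_colon]
    intro w hw
    rw [smul_eq_mul, mem_brk]
    intro τ hτ
    by_contra hc
    push_neg at hc
    have hτg : τ ≤ g := by
      intro i
      rw [hgapp]
      have := hc i
      omega
    exact mem_support_iff.mp hτ (hvanish τ hτg w hw)
  -- the distinguished coefficient equals ψ f ≠ 0
  have hcoefg : coeff g (u * f) = ψ f := by
    rw [hcoeff g le_rfl f, tsub_self]
    have h1 : (monomial (0 : Fin (n+1) →₀ ℕ) (1:k)) = 1 := by
      rw [monomial_zero', C_1]
    rw [h1, one_mul]
    set tr := ∑ ν ∈ Finset.Iic g, monomial ν (coeff ν f) with htr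
    have herr : f - tr ∈ brk (maxIdeal k n) q := by
      rw [mem_brk]
      intro ν hν
      have hνg := htruncsupp g f ν hν
      obtain ⟨i, hi⟩ : ∃ i, g i < ν i := by
        by_contra hc
        push_neg at hc
        exact hνg fun i => hc i
      refine ⟨i, ?_⟩
      rw [hgapp] at hi
      omega
    have : ψ (f - tr) = 0 := hψI' _ (hBI herr)
    have h2 : ψ tr = ψ f - ψ (f - tr) := by rw [map_sub]; ring
    rw [h2, this, sub_zero]
  refine ⟨u, hucolon, ?_⟩
  intro hsup
  obtain ⟨a, ha, b, hb, hab⟩ := Submodule.mem_sup.mp hsup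
  have hs : q - 1 ≤ (n+1)*(q-1) := Nat.le_mul_of_pos_left _ (by omega)
  have hcoefa : coeff g (a * f) = 0 := by
    by_contra h0
    obtain ⟨i, hi⟩ := (mem_brk p e).mp (Ideal.mul_mem_right f _ ha) g
      (mem_support_iff.mpr h0)
    rw [hgapp] at hi
    omega
  have hcoefb : coeff g (b * f) = 0 := by
    have hmem : b * f ∈ (maxIdeal k n) ^ ((n+1)*(q-1) - r + 1 + r) := by
      rw [pow_add]
      exact Ideal.mul_mem_mul hb hf
    by_contra h0
    have := mem_pow_maxIdeal.mp hmem g (mem_support_iff.mpr h0)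
    have hdgg : dg g = (n+1)*(q-1) := by
      rw [dg]
      have : ∀ i ∈ Finset.univ, g i = q - 1 := fun i _ => hgapp i
      rw [Finset.sum_congr rfl this, Finset.sum_const, Finset.card_univ,
        Fintype.card_fin, smul_eq_mul]
    omega
  have : coeff g (u * f) = 0 := by
    rw [← hab, add_mul, coeff_add, hcoefa, hcoefb, add_zero]
  rw [hcoefg] at this
  exact hψf this

end U

end Stmt3Aux

open Stmt3Aux in
theorem stmt3 (k : Type) [Field k] (p : ℕ) [Fact p.Prime] [CharP k p] (n : ℕ)
    (I : Ideal (MvPolynomial (Fin (n + 1)) k)) (hI : I ≠ ⊤) (hI0 : I ≠ ⊥)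
    (hrad : I.radical = maxIdeal k n) :
    ∃ e₀ : ℕ, ∀ e ≥ e₀,
      ((n : ℤ) + 1) * (p : ℤ) ^ e - (Mq k n I (p ^ e) : ℤ) =
        (reg k n I : ℤ) + ((n : ℤ) + 1) := by
  classical
  have hp2 : 2 ≤ p := (Fact.out (p := p.Prime)).two_le
  -- the set defining reg
  set R : Set ℕ := {a : ℕ | ¬ (maxIdeal k n) ^ a ≤ I} with hR
  obtain ⟨N, hN⟩ : ∃ N, (maxIdeal k n) ^ N ≤ I := by
    apply Ideal.exists_pow_le_of_le_radical_of_fg hrad.ge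
    rw [maxIdeal]
    exact Submodule.fg_span (Set.finite_range _)
  have hbdd : BddAbove R := by
    refine ⟨N, fun a ha => ?_⟩
    by_contra hc
    push_neg at hc
    exact ha ((Ideal.pow_le_pow_right hc.le).trans hN)
  have hne : R.Nonempty := by
    refine ⟨0, ?_⟩
    rw [hR, Set.mem_setOf_eq, pow_zero, Ideal.one_eq_top]
    exact fun h => hI (top_le_iff.mp h)
  set r := reg k n I with hr
  have hr1 : ¬ (maxIdeal k n) ^ r ≤ I := Nat.sSup_mem hne hbdd
  have hr2 : (maxIdeal k n) ^ (r + 1) ≤ I := by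
    by_contra h
    have : r + 1 ≤ r := le_csSup hbdd h
    omega
  refine ⟨r + 2, fun e he => ?_⟩
  have h2e : e < 2 ^ e := Nat.lt_two_pow_self
  have hqbig : r + 2 ≤ p ^ e := by
    have : (2:ℕ) ^ e ≤ p ^ e := Nat.pow_le_pow_left hp2 e
    omega
  set q := p ^ e with hq
  have hq1 : 1 ≤ q := by omega
  set s := (n + 1) * (q - 1) with hs
  have hrs : r + 1 ≤ s := by
    have : q - 1 ≤ s := Nat.le_mul_of_pos_left _ (by omega)
    omega
  set L : Set ℕ := {ℓ : ℕ | Submodule.colon (brk (maxIdeal k n) q) I ≤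
    brk (maxIdeal k n) q ⊔ (maxIdeal k n) ^ ℓ} with hL
  have hmemL : s - r ∈ L := by
    rw [hL, Set.mem_setOf_eq]
    intro u hu
    have key : ∀ w ∈ (maxIdeal k n) ^ (r + 1), u * w ∈ brk (maxIdeal k n) q := by
      intro w hw
      have := Submodule.mem_colon.mp hu w (hr2 hw)
      rwa [smul_eq_mul] at this
    have := colon_pow_le p e (r + 1) u key
    have harith : (n + 1) * (p ^ e - 1) + 1 - (r + 1) = s - r := by
      rw [hs, hq]
      omega
    rwa [harith] at this
  have hnotmemL : s - r + 1 ∉ L := by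
    obtain ⟨f, hf, hfI⟩ := SetLike.not_le_iff_exists.mp hr1
    obtain ⟨u, hu1, hu2⟩ := exists_u p e r I hqbig hr2 f hf hfI
    intro hmem
    rw [hL, Set.mem_setOf_eq] at hmem
    exact hu2 (by simpa [hq, hs] using hmem hu1)
  have hub : ∀ ℓ ∈ L, ℓ ≤ s - r := by
    intro ℓ hℓ
    by_contra hc
    push_neg at hc
    apply hnotmemL
    rw [hL, Set.mem_setOf_eq]
    refine le_trans hℓ (sup_le_sup_left (Ideal.pow_le_pow_right (by omega)) _)
  have hMq : Mq k n I q = s - r := by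
    rw [Mq]
    exact le_antisymm (csSup_le ⟨s - r, hmemL⟩ hub) (le_csSup ⟨s - r, hub⟩ hmemL)
  rw [hMq]
  have hr_le_s : r ≤ s := by omega
  have hcast1 : ((s - r : ℕ) : ℤ) = (s : ℤ) - (r : ℤ) := by
    exact_mod_cast Int.ofNat_sub hr_le_s
  have hcast2 : (s : ℤ) = ((n : ℤ) + 1) * ((q : ℤ) - 1) := by
    rw [hs]
    push_cast [Nat.cast_sub hq1]
    ring
  have hcast3 : (q : ℤ) = (p : ℤ) ^ e := by
    rw [hq]; push_cast; ring
  rw [hcast1, hcast2, hcast3]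
  ring
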